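/- Let α ∈ (0, 1) and ρ ∈ [0, 1). Then ∑_{n=2}^∞ 2·ρⁿ/(α·n² + (1 − α)·n) = (2/(1 − α)) · ( α/(1 − α) + ρ·(α − 1) − ln(1 − ρ) − Φ(ρ, 1, (1 − α)/α) ), where Φ(z, 1, a) = ∑_{k=0}^∞ z^k/(k + a) is the Lerch transcendent with s = 1. -/

import Mathlib

/-- Evaluation of the series `∑_{n≥2} 2ρⁿ/(αn² + (1-α)n)` in terms of the
Lerch transcendent `Φ(ρ, 1, a) = ∑_{k≥0} ρᵏ/(k + a)` with `a = (1-α)/α`: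
for `α ∈ (0,1)` and `ρ ∈ [0,1)`,
`∑_{n≥2} 2ρⁿ/(αn² + (1-α)n)
  = (2/(1-α)) (α/(1-α) + ρ(α-1) - ln(1-ρ) - Φ(ρ, 1, (1-α)/α))`. -/
theorem lerch_series_evaluation (α ρ : ℝ) (hα : α ∈ Set.Ioo (0:ℝ) 1)
    (hρ : ρ ∈ Set.Ico (0:ℝ) 1) :
    ∑' n : ℕ, 2 * ρ ^ (n + 2) / (α * (n + 2) ^ 2 + (1 - α) * (n + 2)) =
      2 / (1 - α) *
        (α / (1 - α) + ρ * (α - 1) - Real.log (1 - ρ)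
          - ∑' k : ℕ, ρ ^ k / (k + (1 - α) / α)) := by
  obtain ⟨hα0, hα1⟩ := hα
  obtain ⟨hρ0, hρ1⟩ := hρ
  have hαne : α ≠ 0 := ne_of_gt hα0
  have h1α : (0:ℝ) < 1 - α := by linarith
  have h1αne : (1:ℝ) - α ≠ 0 := ne_of_gt h1α
  set a : ℝ := (1 - α) / α with ha_def
  have ha0 : 0 < a := div_pos h1α hα0
  -- log series
  have hρabs : |ρ| < 1 := by rw [abs_lt]; constructor <;> linarith
  have hlog : HasSum (fun n : ℕ => ρ ^ (n + 1) / (n + 1)) (-Real.log (1 - ρ)) :=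
    Real.hasSum_pow_div_log_of_abs_lt_one hρabs
  have hlog2 : HasSum (fun n : ℕ => ρ ^ (n + 2) / (n + 2)) (-Real.log (1 - ρ) - ρ) := by
    have h2 := (hasSum_nat_add_iff' (f := fun n : ℕ => ρ ^ (n + 1) / (n + 1)) 1).2 hlog
    simp only [Finset.range_one, Finset.sum_singleton] at h2
    norm_num at h2
    convert h2 using 2 with n
    · rfl
    ring_nf
  -- Lerch summability
  have hΦsummable : Summable (fun k : ℕ => ρ ^ k / (k + a)) := by
    apply Summable.of_nonneg_of_le
    · intro k
      positivity
    · intro k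
      have hk : a ≤ (k : ℝ) + a := by linarith [Nat.cast_nonneg (α := ℝ) k]
      calc ρ ^ k / (k + a) ≤ ρ ^ k / a := by
            apply div_le_div_of_nonneg_left (by positivity) ha0 hk
        _ = (1/a) * ρ ^ k := by ring
    · exact (summable_geometric_of_lt_one hρ0 hρ1).mul_left _
  set L : ℝ := ∑' k : ℕ, ρ ^ k / (k + a) with hL
  have hΦ : HasSum (fun k : ℕ => ρ ^ k / (k + a)) L := hΦsummable.hasSum
  have hΦ2 : HasSum (fun n : ℕ => ρ ^ (n + 2) / (n + 2 + a))
      (L - (1/a + ρ/(1+a))) := by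
    have h2 := (hasSum_nat_add_iff' (f := fun k : ℕ => ρ ^ k / (k + a)) 2).2 hΦ
    have hsum2 : ∑ i ∈ Finset.range 2, ρ ^ i / (i + a) = 1/a + ρ/(1+a) := by
      simp [Finset.sum_range_succ]
    rw [hsum2] at h2
    convert h2 using 2 with n
    · rfl
    push_cast; ring_nf
  -- combined HasSum
  have hmain : HasSum (fun n : ℕ => 2 * ρ ^ (n + 2) / (α * (n + 2) ^ 2 + (1 - α) * (n + 2)))
      (2/(1-α) * ((-Real.log (1 - ρ) - ρ) - (L - (1/a + ρ/(1+a))))) := by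
    have h := (hlog2.sub hΦ2).mul_left (2/(1-α))
    convert h using 2 with n
    · rfl
    have hn2 : (0:ℝ) < (n:ℝ) + 2 := by positivity
    have hn2a : (0:ℝ) < (n:ℝ) + 2 + a := by positivity
    rw [ha_def] at hn2a ⊢
    field_simp
    ring
  rw [hmain.tsum_eq]
  rw [ha_def] at *
  field_simp
  ring
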